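/- Let 1 < p < 3 and set q = (p−3)/2 and q′ = (5−3p)/6 (so q + q′ = −2/3). Let μ,ν>0 with Sc=ν/μ, let ε>0, set κ'_β=(ε/(νμ²))^{1/4}, and fix constants c0 ≥ 1 and c1,c2>0. Let t be a tracer spectrum (3D framework) with shell sums 𝐭 and dissipation rate χ, and let wavenumbers satisfy κ0 ≤ κg ≤ c0·κ0 and 4κg ≤ κ_ε. Assume that for every κ∈[κg,κ_ε], c1·χ·ε^{-1/3}·κ0^{q′}·κ^{q} ≤ 𝐭_{κ,2κ} ≤ c2·χ·ε^{-1/3}·κ0^{q′}·κ^{q}. Then there exist constants c,C>0 depending only on p, c0, c1, c2 such that c·χ·ε^{-1/3}·κ0^{-2/3} ≤ 𝐭_{κg,κ_ε} ≤ C·χ·ε^{-1/3}·κ0^{-2/3}; equivalently, c·(χ/μ)·(κ'_β)^{-4/3}·Sc^{-1/3}·κ0^{-2/3} ≤ 𝐭_{κg,κ_ε} ≤ C·(χ/μ)·(κ'_β)^{-4/3}·Sc^{-1/3}·κ0^{-2/3}. (The Observation in Section 6: the estimate for κ_θ is insensitive to the decay rate p of a dimensionally correct 3D energy spectrum ε^{2/3}κ0^{p−5/3}κ^{-p}.)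 -/

import Mathlib

open Real

/-- Euclidean norm of a lattice vector `k ∈ ℤ^d`. -/
noncomputable def knorm {d : ℕ} (k : Fin d → ℤ) : ℝ :=
  Real.sqrt (∑ i, ((k i : ℝ)) ^ 2)

/-- Shell sum `𝐭_{κ1,κ2}` (finite upper end). -/
noncomputable def shellSum (d : ℕ) (L κ0 : ℝ) (t : (Fin d → ℤ) → ℝ) (κ1 κ2 : ℝ) : ℝ :=
  L ^ (-(d : ℤ)) * ∑' k : Fin d → ℤ,
    (if κ1 ≤ κ0 * knorm k ∧ κ0 * knorm k < κ2 then t k else 0)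

/-- Shell sum `𝐭_{κ1,∞}`. -/
noncomputable def shellSumTop (d : ℕ) (L κ0 : ℝ) (t : (Fin d → ℤ) → ℝ) (κ1 : ℝ) : ℝ :=
  L ^ (-(d : ℤ)) * ∑' k : Fin d → ℤ, (if κ1 ≤ κ0 * knorm k then t k else 0)

/-- Tracer dissipation rate `χ = μ L^{-d} κ0² Σ_k |k|² t(k)`. -/
noncomputable def chiRate (d : ℕ) (L κ0 μ : ℝ) (t : (Fin d → ℤ) → ℝ) : ℝ :=
  μ * L ^ (-(d : ℤ)) * κ0 ^ 2 * ∑' k : Fin d → ℤ, knorm k ^ 2 * t k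

/-- Indicator wavenumber squared, `κ_θ² = κ0² Σ|k|²t(k) / Σ t(k)`. -/
noncomputable def kThetaSq (d : ℕ) (κ0 : ℝ) (t : (Fin d → ℤ) → ℝ) : ℝ :=
  κ0 ^ 2 * (∑' k : Fin d → ℤ, knorm k ^ 2 * t k) / (∑' k : Fin d → ℤ, t k)

/-- A (discrete) tracer spectrum: nonnegative, vanishing at `k = 0`, not identically
zero, and with `Σ (1+|k|²) t(k) < ∞`. -/
structure IsTracerSpectrum (d : ℕ) (t : (Fin d → ℤ) → ℝ) : Prop where
  nonneg : ∀ k, 0 ≤ t k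
  map_zero : t 0 = 0
  exists_ne_zero : ∃ k, t k ≠ 0
  summable : Summable fun k : Fin d → ℤ => (1 + knorm k ^ 2) * t k

lemma knorm_sq_nonneg {d : ℕ} (k : Fin d → ℤ) : 0 ≤ knorm k ^ 2 :=
  sq_nonneg _

lemma summable_t {d : ℕ} {t : (Fin d → ℤ) → ℝ} (ht : IsTracerSpectrum d t) :
    Summable t := by
  refine ht.summable.of_nonneg_of_le ht.nonneg fun k => ?_
  nlinarith [ht.nonneg k, knorm_sq_nonneg k]

lemma summable_ind {d : ℕ} {t : (Fin d → ℤ) → ℝ} (ht : IsTracerSpectrum d t)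
    (P : (Fin d → ℤ) → Prop) [DecidablePred P] :
    Summable (fun k => if P k then t k else 0) := by
  refine (summable_t ht).of_nonneg_of_le (fun k => ?_) (fun k => ?_)
  · split_ifs with h; exacts [ht.nonneg k, le_rfl]
  · split_ifs with h; exacts [le_rfl, ht.nonneg k]

lemma shell_nonneg {d : ℕ} {L κ0 : ℝ} (hL : 0 < L) {t : (Fin d → ℤ) → ℝ}
    (ht : IsTracerSpectrum d t) (a b : ℝ) : 0 ≤ shellSum d L κ0 t a b := by
  refine mul_nonneg (zpow_nonneg hL.le _) (tsum_nonneg fun k => ?_)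
  split_ifs with h; exacts [ht.nonneg k, le_rfl]

lemma shell_mono {d : ℕ} {L κ0 : ℝ} (hL : 0 < L) {t : (Fin d → ℤ) → ℝ}
    (ht : IsTracerSpectrum d t) {a b a' b' : ℝ} (ha : a' ≤ a) (hb : b ≤ b') :
    shellSum d L κ0 t a b ≤ shellSum d L κ0 t a' b' := by
  refine mul_le_mul_of_nonneg_left (Summable.tsum_le_tsum (fun k => ?_)
    (summable_ind ht _) (summable_ind ht _)) (zpow_nonneg hL.le _)
  split_ifs with h1 h2
  · exact le_rfl
  · exact absurd ⟨ha.trans h1.1, h1.2.trans_le hb⟩ h2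
  · exact ht.nonneg k
  · exact le_rfl

lemma shell_add {d : ℕ} {L κ0 : ℝ} {t : (Fin d → ℤ) → ℝ}
    (ht : IsTracerSpectrum d t) {a b c : ℝ} (hab : a ≤ b) (hbc : b ≤ c) :
    shellSum d L κ0 t a c = shellSum d L κ0 t a b + shellSum d L κ0 t b c := by
  rw [shellSum, shellSum, shellSum, ← mul_add,
    ← Summable.tsum_add (summable_ind ht _) (summable_ind ht _)]
  congr 1
  refine tsum_congr fun k => ?_
  set x := κ0 * knorm k with hx
  rcases lt_or_ge x b with hxb | hxb
  · have h3 : (if b ≤ x ∧ x < c then t k else 0) = 0 :=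
      if_neg (fun h => absurd h.1 (not_le.2 hxb))
    rw [h3, add_zero]
    by_cases h1 : a ≤ x
    · have hxc := hxb.trans_le hbc
      rw [if_pos ⟨h1, hxc⟩, if_pos ⟨h1, hxb⟩]
    · rw [if_neg (show ¬(a ≤ x ∧ x < c) from fun h => h1 h.1),
        if_neg (show ¬(a ≤ x ∧ x < b) from fun h => h1 h.1)]
  · have h2 : (if a ≤ x ∧ x < b then t k else 0) = 0 :=
      if_neg (fun h => absurd h.2 (not_lt.2 hxb))
    rw [h2, zero_add]
    by_cases hxc : x < c
    · rw [if_pos ⟨hab.trans hxb, hxc⟩, if_pos ⟨hxb, hxc⟩]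
    · rw [if_neg (show ¬(a ≤ x ∧ x < c) from fun h => hxc h.2),
        if_neg (show ¬(b ≤ x ∧ x < c) from fun h => hxc h.2)]

lemma shell_empty {d : ℕ} {L κ0 : ℝ} {t : (Fin d → ℤ) → ℝ} {a b : ℝ} (h : b ≤ a) :
    shellSum d L κ0 t a b = 0 := by
  rw [shellSum]
  convert mul_zero _
  convert tsum_zero with k
  rw [if_neg]
  rintro ⟨h1, h2⟩; linarith

/-- The Observation in Section 6: the estimate is insensitive to the decay rate `p`
of a dimensionally correct 3D energy spectrum. -/
theorem tracer_3D_observation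
    (p c0 c1 c2 : ℝ)
    (hp1 : 1 < p) (hp3 : p < 3)
    (hc0 : 1 ≤ c0) (hc1 : 0 < c1) (hc2 : 0 < c2) :
    ∃ c C : ℝ, 0 < c ∧ 0 < C ∧
      ∀ (L μ ν ε κg κε κ0 Sc κβ' χ q q' : ℝ) (t : (Fin 3 → ℤ) → ℝ),
        0 < L → 0 < μ → 0 < ν → 0 < ε →
        IsTracerSpectrum 3 t →
        κ0 = 2 * π / L →
        Sc = ν / μ →
        κβ' = (ε / (ν * μ ^ 2)) ^ (1 / 4 : ℝ) →
        χ = chiRate 3 L κ0 μ t →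
        q = (p - 3) / 2 →
        q' = (5 - 3 * p) / 6 →
        κ0 ≤ κg → κg ≤ c0 * κ0 → 4 * κg ≤ κε →
        (∀ κ, κg ≤ κ → κ ≤ κε →
          c1 * χ * ε ^ (-1 / 3 : ℝ) * κ0 ^ q' * κ ^ q ≤ shellSum 3 L κ0 t κ (2 * κ) ∧
          shellSum 3 L κ0 t κ (2 * κ) ≤ c2 * χ * ε ^ (-1 / 3 : ℝ) * κ0 ^ q' * κ ^ q) →
        (c * χ * ε ^ (-1 / 3 : ℝ) * κ0 ^ (-2 / 3 : ℝ) ≤ shellSum 3 L κ0 t κg κε ∧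
          shellSum 3 L κ0 t κg κε ≤ C * χ * ε ^ (-1 / 3 : ℝ) * κ0 ^ (-2 / 3 : ℝ)) ∧
        (c * (χ / μ) * κβ' ^ (-4 / 3 : ℝ) * Sc ^ (-1 / 3 : ℝ) * κ0 ^ (-2 / 3 : ℝ) ≤
            shellSum 3 L κ0 t κg κε ∧
          shellSum 3 L κ0 t κg κε ≤
            C * (χ / μ) * κβ' ^ (-4 / 3 : ℝ) * Sc ^ (-1 / 3 : ℝ) * κ0 ^ (-2 / 3 : ℝ)) := by
  set r : ℝ := (2 : ℝ) ^ ((p - 3) / 2 : ℝ) with hrdef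
  have hr0 : 0 < r := Real.rpow_pos_of_pos two_pos _
  have hr1 : r < 1 :=
    Real.rpow_lt_one_of_one_lt_of_neg one_lt_two (by linarith)
  have h1r : 0 < 1 - r := by linarith
  refine ⟨c1 * c0 ^ ((p - 3) / 2 : ℝ), c2 / (1 - r),
    mul_pos hc1 (Real.rpow_pos_of_pos (by linarith) _), div_pos hc2 h1r, ?_⟩
  intro L μ ν ε κg κε κ0 Sc κβ' χ q q' t hL hμ hν hε ht hκ0 hSc hκβ hχ hq hq' hg1 hg2 hg3 H
  subst hq hq' hSc hκβ
  have hκ0pos : 0 < κ0 := by rw [hκ0]; positivity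
  have hκg : 0 < κg := hκ0pos.trans_le hg1
  have hgε : κg ≤ κε := by linarith
  have hχ0 : 0 ≤ χ := by
    rw [hχ, chiRate]
    refine mul_nonneg (by positivity) (tsum_nonneg fun k => ?_)
    exact mul_nonneg (sq_nonneg _) (ht.nonneg k)
  have hqneg : ((p - 3) / 2 : ℝ) ≤ 0 := by linarith
  set X : ℝ := χ * ε ^ (-1 / 3 : ℝ) * κ0 ^ ((5 - 3 * p) / 6 : ℝ) with hXdef
  have hX : 0 ≤ X := by
    refine mul_nonneg (mul_nonneg hχ0 ?_) ?_
    · exact (Real.rpow_pos_of_pos hε _).le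
    · exact (Real.rpow_pos_of_pos hκ0pos _).le
  have hexp : κ0 ^ ((5 - 3 * p) / 6 : ℝ) * κ0 ^ ((p - 3) / 2 : ℝ) = κ0 ^ (-2 / 3 : ℝ) := by
    rw [← Real.rpow_add hκ0pos]
    norm_num
    ring_nf
  -- lower bound
  have hlow : c1 * c0 ^ ((p - 3) / 2 : ℝ) * χ * ε ^ (-1 / 3 : ℝ) * κ0 ^ (-2 / 3 : ℝ) ≤
      shellSum 3 L κ0 t κg κε := by
    have hb := (H κg le_rfl hgε).1
    have hmono : shellSum 3 L κ0 t κg (2 * κg) ≤ shellSum 3 L κ0 t κg κε :=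
      shell_mono hL ht le_rfl (by linarith)
    have hkq : (c0 * κ0) ^ ((p - 3) / 2 : ℝ) ≤ κg ^ ((p - 3) / 2 : ℝ) :=
      Real.rpow_le_rpow_of_nonpos hκg hg2 hqneg
    have hmul : (c0 * κ0) ^ ((p - 3) / 2 : ℝ) =
        c0 ^ ((p - 3) / 2 : ℝ) * κ0 ^ ((p - 3) / 2 : ℝ) :=
      Real.mul_rpow (by linarith) hκ0pos.le
    have step : c1 * c0 ^ ((p - 3) / 2 : ℝ) * χ * ε ^ (-1 / 3 : ℝ) * κ0 ^ (-2 / 3 : ℝ) ≤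
        c1 * χ * ε ^ (-1 / 3 : ℝ) * κ0 ^ ((5 - 3 * p) / 6 : ℝ) * κg ^ ((p - 3) / 2 : ℝ) := by
      have h1 : c1 * c0 ^ ((p - 3) / 2 : ℝ) * χ * ε ^ (-1 / 3 : ℝ) * κ0 ^ (-2 / 3 : ℝ) =
          (c1 * χ * ε ^ (-1 / 3 : ℝ) * κ0 ^ ((5 - 3 * p) / 6 : ℝ)) *
            ((c0 * κ0) ^ ((p - 3) / 2 : ℝ)) := by
        rw [hmul, ← hexp]; ring
      rw [h1]
      refine mul_le_mul_of_nonneg_left hkq ?_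
      positivity
    exact step.trans (hb.trans hmono)
  -- upper bound via dyadic induction
  have key : ∀ N : ℕ, ∀ a : ℝ, κg ≤ a → κε ≤ 2 ^ N * a →
      shellSum 3 L κ0 t a κε ≤ c2 * X / (1 - r) * a ^ ((p - 3) / 2 : ℝ) := by
    intro N
    induction N with
    | zero =>
      intro a ha hle
      rw [pow_zero, one_mul] at hle
      rw [shell_empty hle]
      have ha0 : (0:ℝ) ≤ a := (hκg.trans_le ha).le
      exact mul_nonneg (div_nonneg (mul_nonneg hc2.le hX) h1r.le) (Real.rpow_nonneg ha0 _)
    | succ N ih =>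
      intro a ha hle
      have ha0 : 0 < a := hκg.trans_le ha
      have hCX : (0:ℝ) ≤ c2 * X := mul_nonneg hc2.le hX
      have honele : c2 * X ≤ c2 * X / (1 - r) := by
        rw [le_div_iff₀ h1r]
        nlinarith [hr0]
      rcases le_or_gt κε a with hea | hea
      · rw [shell_empty hea]
        exact mul_nonneg (div_nonneg hCX h1r.le) (Real.rpow_nonneg ha0.le _)
      · have hb := (H a ha hea.le).2
        have hbX : shellSum 3 L κ0 t a (2 * a) ≤ c2 * X * a ^ ((p - 3) / 2 : ℝ) := by
          rw [hXdef]; calc shellSum 3 L κ0 t a (2 * a) ≤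
              c2 * χ * ε ^ (-1 / 3 : ℝ) * κ0 ^ ((5 - 3 * p) / 6 : ℝ) *
                a ^ ((p - 3) / 2 : ℝ) := hb
            _ = c2 * (χ * ε ^ (-1 / 3 : ℝ) * κ0 ^ ((5 - 3 * p) / 6 : ℝ)) *
                a ^ ((p - 3) / 2 : ℝ) := by ring
        rcases le_or_gt κε (2 * a) with h2a | h2a
        · calc shellSum 3 L κ0 t a κε ≤ shellSum 3 L κ0 t a (2 * a) :=
              shell_mono hL ht le_rfl h2a
            _ ≤ c2 * X * a ^ ((p - 3) / 2 : ℝ) := hbX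
            _ ≤ c2 * X / (1 - r) * a ^ ((p - 3) / 2 : ℝ) :=
              mul_le_mul_of_nonneg_right honele (Real.rpow_nonneg ha0.le _)
        · have hIH : shellSum 3 L κ0 t (2 * a) κε ≤
              c2 * X / (1 - r) * (2 * a) ^ ((p - 3) / 2 : ℝ) := by
            refine ih (2 * a) (by linarith) ?_
            calc κε ≤ 2 ^ (N + 1) * a := hle
              _ = 2 ^ N * (2 * a) := by ring
          have h2aq : (2 * a) ^ ((p - 3) / 2 : ℝ) = r * a ^ ((p - 3) / 2 : ℝ) :=
            Real.mul_rpow (by norm_num) ha0.le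
          calc shellSum 3 L κ0 t a κε
              = shellSum 3 L κ0 t a (2 * a) + shellSum 3 L κ0 t (2 * a) κε :=
                shell_add ht (by linarith) h2a.le
            _ ≤ c2 * X * a ^ ((p - 3) / 2 : ℝ) +
                c2 * X / (1 - r) * (2 * a) ^ ((p - 3) / 2 : ℝ) := add_le_add hbX hIH
            _ = c2 * X / (1 - r) * a ^ ((p - 3) / 2 : ℝ) := by
                rw [h2aq]; field_simp; ring
  obtain ⟨N, hN⟩ := pow_unbounded_of_one_lt (κε / κg) (one_lt_two (α := ℝ))
  have hNle : κε ≤ 2 ^ N * κg := by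
    rw [div_lt_iff₀ hκg] at hN
    linarith
  have hupp : shellSum 3 L κ0 t κg κε ≤
      c2 / (1 - r) * χ * ε ^ (-1 / 3 : ℝ) * κ0 ^ (-2 / 3 : ℝ) := by
    have h0 := key N κg le_rfl hNle
    have h1 : κg ^ ((p - 3) / 2 : ℝ) ≤ κ0 ^ ((p - 3) / 2 : ℝ) :=
      Real.rpow_le_rpow_of_nonpos hκ0pos hg1 hqneg
    calc shellSum 3 L κ0 t κg κε ≤ c2 * X / (1 - r) * κg ^ ((p - 3) / 2 : ℝ) := h0
      _ ≤ c2 * X / (1 - r) * κ0 ^ ((p - 3) / 2 : ℝ) :=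
        mul_le_mul_of_nonneg_left h1 (div_nonneg (mul_nonneg hc2.le hX) h1r.le)
      _ = c2 / (1 - r) * χ * ε ^ (-1 / 3 : ℝ) * κ0 ^ (-2 / 3 : ℝ) := by
        rw [hXdef, ← hexp]; ring
  -- the algebraic identity for the second form
  have hid : ∀ y : ℝ,
      y * (χ / μ) * ((ε / (ν * μ ^ 2)) ^ (1 / 4 : ℝ)) ^ (-4 / 3 : ℝ) *
        (ν / μ) ^ (-1 / 3 : ℝ) * κ0 ^ (-2 / 3 : ℝ) =
      y * χ * ε ^ (-1 / 3 : ℝ) * κ0 ^ (-2 / 3 : ℝ) := by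
    intro y
    have hx : (0:ℝ) < ε / (ν * μ ^ 2) := by positivity
    have s1 : ((ε / (ν * μ ^ 2)) ^ (1 / 4 : ℝ)) ^ (-4 / 3 : ℝ) =
        (ε / (ν * μ ^ 2)) ^ (-1 / 3 : ℝ) := by
      rw [← Real.rpow_mul hx.le]
      norm_num
    have s2 : (ε / (ν * μ ^ 2)) ^ (-1 / 3 : ℝ) * (ν / μ) ^ (-1 / 3 : ℝ) =
        (ε / μ ^ 3) ^ (-1 / 3 : ℝ) := by
      rw [← Real.mul_rpow hx.le (by positivity)]
      congr 1
      field_simp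
    have s3 : (ε / μ ^ 3) ^ (-1 / 3 : ℝ) = μ * ε ^ (-1 / 3 : ℝ) := by
      rw [Real.div_rpow hε.le (by positivity)]
      rw [show ((μ ^ 3 : ℝ)) ^ (-1 / 3 : ℝ) = μ⁻¹ by
        rw [← Real.rpow_natCast μ 3, ← Real.rpow_mul hμ.le]
        norm_num
        exact Real.rpow_neg_one μ]
      rw [div_eq_mul_inv, inv_inv]
      ring
    calc y * (χ / μ) * ((ε / (ν * μ ^ 2)) ^ (1 / 4 : ℝ)) ^ (-4 / 3 : ℝ) *
          (ν / μ) ^ (-1 / 3 : ℝ) * κ0 ^ (-2 / 3 : ℝ)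
        = y * (χ / μ) * ((ε / (ν * μ ^ 2)) ^ (-1 / 3 : ℝ) * (ν / μ) ^ (-1 / 3 : ℝ)) *
          κ0 ^ (-2 / 3 : ℝ) := by rw [s1]; ring
      _ = y * (χ / μ) * (μ * ε ^ (-1 / 3 : ℝ)) * κ0 ^ (-2 / 3 : ℝ) := by rw [s2, s3]
      _ = y * χ * ε ^ (-1 / 3 : ℝ) * κ0 ^ (-2 / 3 : ℝ) := by
          field_simp
  refine ⟨⟨hlow, hupp⟩, ?_, ?_⟩
  · rw [hid]; exact hlow
  · rw [hid]; exact hupp
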